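/- For any connected graph G with minimum degree δ(G) that has two adjacent vertices both of degree δ(G), and any k with 3 ≤ k ≤ |V(G)|, the generalized k-connectivity satisfies κ_k(G) ≤ δ(G) − 1. -/
import Mathlib

open Finset


/-- `T` is an `S`-tree of `G`: a subtree of `G` containing all of `S`. -/
def IsSTree {V : Type*} (G : SimpleGraph V) (S : Set V) (T : G.Subgraph) : Prop :=
  T.coe.IsTree ∧ S ⊆ T.verts

/-- There are `r` pairwise internally edge disjoint `S`-trees in `G`. -/
def HasIEDTrees {V : Type*} (G : SimpleGraph V) (S : Set V) (r : ℕ) : Prop :=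
  ∃ T : Fin r → G.Subgraph, (∀ i, IsSTree G S (T i)) ∧
    ∀ i j, i ≠ j →
      (T i).verts ∩ (T j).verts = S ∧ (T i).edgeSet ∩ (T j).edgeSet = ∅

/-- `κ_G(S)`: the maximum number of pairwise internally edge disjoint `S`-trees. -/
noncomputable def treeConn {V : Type*} (G : SimpleGraph V) (S : Set V) : ℕ :=
  sSup {r | HasIEDTrees G S r}

/-- The generalized `k`-connectivity `κ_k(G)`. -/
noncomputable def gconn {V : Type*} (G : SimpleGraph V) (k : ℕ) : ℕ :=
  sInf {m | ∃ S : Finset V, S.card = k ∧ m = treeConn G (S : Set V)}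


section Aux
variable {V : Type*}

/-- In a connected subgraph with two distinct vertices, the first has a neighbor. -/
lemma aux_exists_adj {G : SimpleGraph V} {H : G.Subgraph}
    (hc : H.coe.Connected) {a b : V} (ha : a ∈ H.verts) (hb : b ∈ H.verts)
    (hab : a ≠ b) : ∃ c, H.Adj a c := by
  obtain ⟨p⟩ := hc ⟨a, ha⟩ ⟨b, hb⟩
  have hnil : ¬ p.Nil := by
    intro h
    exact hab (by simpa [Subtype.ext_iff] using h.eq)
  exact ⟨(p.getVert 1).val, p.adj_snd hnil⟩

lemma aux_walk_stay {G : SimpleGraph V} {H : G.Subgraph} {u v : V}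
    (hNu : ∀ x, H.Adj u x → x = v) (hNv : ∀ x, H.Adj v x → x = u) :
    ∀ {a b : H.verts} (_ : H.coe.Walk a b),
      (a.val = u ∨ a.val = v) → (b.val = u ∨ b.val = v) := by
  intro a b p
  induction p with
  | nil => exact id
  | @cons x y z h q ih =>
    intro hx
    apply ih
    have h' : H.Adj x.val y.val := h
    rcases hx with h1 | h1
    · right; exact hNu _ (h1 ▸ h')
    · left; exact hNv _ (h1 ▸ h')

lemma aux_cards_one [DecidableEq V] {r d : ℕ} (F : Fin r → Finset V) (B : Finset V) (hB : B.card = d)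
    (hsub : ∀ i, F i ⊆ B) (hdisj : ∀ i j, i ≠ j → Disjoint (F i) (F j))
    (hne : ∀ i, (F i).Nonempty) (hdr : d ≤ r) :
    (∀ i, (F i).card = 1) ∧ Finset.univ.biUnion F = B := by
  have hcardU : (Finset.univ.biUnion F).card = ∑ i, (F i).card :=
    Finset.card_biUnion (fun i _ j _ hij => hdisj i j hij)
  have hsubU : Finset.univ.biUnion F ⊆ B := by
    intro x hx
    obtain ⟨i, _, hi⟩ := Finset.mem_biUnion.mp hx
    exact hsub i hi
  have hle : ∑ i, (F i).card ≤ d := by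
    rw [← hcardU, ← hB]; exact Finset.card_le_card hsubU
  have hge : r ≤ ∑ i, (F i).card := by
    calc r = ∑ _i : Fin r, 1 := by simp
    _ ≤ ∑ i, (F i).card := Finset.sum_le_sum fun i _ => (hne i).card_pos
  have hsum : ∑ i, (F i).card = r := le_antisymm (hle.trans hdr) hge
  have hone : ∀ i, (F i).card = 1 := by
    by_contra hc
    push_neg at hc
    obtain ⟨j, hj⟩ := hc
    have h2 : 1 < (F j).card := lt_of_le_of_ne (hne j).card_pos (Ne.symm hj)
    have : ∑ _i : Fin r, 1 < ∑ i, (F i).card :=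
      Finset.sum_lt_sum (fun i _ => (hne i).card_pos) ⟨j, Finset.mem_univ j, h2⟩
    simp [hsum] at this
  refine ⟨hone, Finset.eq_of_subset_of_card_le hsubU ?_⟩
  rw [hB, hcardU, hsum]
  omega

lemma aux_key [Fintype V] (G : SimpleGraph V) [DecidableRel G.Adj]
    {u v w : V} (huv : G.Adj u v) {d : ℕ} (hu : G.degree u = d) (hv : G.degree v = d)
    {S : Set V} (hus : u ∈ S) (hvs : v ∈ S) (hws : w ∈ S) (hwu : w ≠ u) (hwv : w ≠ v)
    {r : ℕ} (h : HasIEDTrees G S r) : r ≤ d - 1 := by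
  classical
  by_contra hcon
  push_neg at hcon
  have hd1 : 1 ≤ d := by
    rw [← hu]
    exact Finset.card_pos.mpr ⟨v, (SimpleGraph.mem_neighborFinset G u v).mpr huv⟩
  have hdr : d ≤ r := by omega
  obtain ⟨T, hT, hdisj⟩ := h
  -- neighbor finsets at u and at v
  set Fu : Fin r → Finset V := fun i => (Set.toFinite ((T i).neighborSet u)).toFinset with hFu
  set Fv : Fin r → Finset V := fun i => (Set.toFinite ((T i).neighborSet v)).toFinset with hFv
  have hmemFu : ∀ i x, x ∈ Fu i ↔ (T i).Adj u x := by
    intro i x; simp [hFu, Set.Finite.mem_toFinset, SimpleGraph.Subgraph.mem_neighborSet]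
  have hmemFv : ∀ i x, x ∈ Fv i ↔ (T i).Adj v x := by
    intro i x; simp [hFv, Set.Finite.mem_toFinset, SimpleGraph.Subgraph.mem_neighborSet]
  have hdisjF : ∀ (a : V) (F : Fin r → Finset V),
      (∀ i x, x ∈ F i ↔ (T i).Adj a x) → ∀ i j, i ≠ j → Disjoint (F i) (F j) := by
    intro a F hmem i j hij
    rw [Finset.disjoint_left]
    intro x hxi hxj
    have h1 : s(a, x) ∈ (T i).edgeSet := (SimpleGraph.Subgraph.mem_edgeSet).mpr ((hmem i x).mp hxi)
    have h2 : s(a, x) ∈ (T j).edgeSet := (SimpleGraph.Subgraph.mem_edgeSet).mpr ((hmem j x).mp hxj)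
    have := (hdisj i j hij).2
    have : s(a, x) ∈ (T i).edgeSet ∩ (T j).edgeSet := ⟨h1, h2⟩
    simp_all
  have hsubF : ∀ (a : V) (F : Fin r → Finset V),
      (∀ i x, x ∈ F i ↔ (T i).Adj a x) → ∀ i, F i ⊆ G.neighborFinset a := by
    intro a F hmem i x hx
    exact (SimpleGraph.mem_neighborFinset G a x).mpr ((hmem i x).mp hx).adj_sub
  have hneF : ∀ (a b : V), a ∈ S → b ∈ S → a ≠ b →
      ∀ (F : Fin r → Finset V), (∀ i x, x ∈ F i ↔ (T i).Adj a x) → ∀ i, (F i).Nonempty := by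
    intro a b haS hbS hab F hmem i
    obtain ⟨c, hc⟩ := aux_exists_adj (hT i).1.isConnected ((hT i).2 haS) ((hT i).2 hbS) hab
    exact ⟨c, (hmem i c).mpr hc⟩
  have huvne : u ≠ v := huv.ne
  obtain ⟨honeU, hUnionU⟩ := aux_cards_one Fu (G.neighborFinset u) hu
    (hsubF u Fu hmemFu) (hdisjF u Fu hmemFu) (hneF u v hus hvs huvne Fu hmemFu) hdr
  obtain ⟨honeV, -⟩ := aux_cards_one Fv (G.neighborFinset v) hv
    (hsubF v Fv hmemFv) (hdisjF v Fv hmemFv) (hneF v u hvs hus huvne.symm Fv hmemFv) hdr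
  -- v is a neighbor of u in some tree i0
  have hvmem : v ∈ Finset.univ.biUnion Fu := by
    rw [hUnionU]; exact (SimpleGraph.mem_neighborFinset G u v).mpr huv
  obtain ⟨i0, -, hvFu⟩ := Finset.mem_biUnion.mp hvmem
  have hadj : (T i0).Adj u v := (hmemFu i0 v).mp hvFu
  -- Fu i0 = {v}, Fv i0 = {u}
  have hNu : ∀ x, (T i0).Adj u x → x = v := by
    intro x hx
    obtain ⟨a, ha⟩ := Finset.card_eq_one.mp (honeU i0)
    have h1 : x ∈ Fu i0 := (hmemFu i0 x).mpr hx
    have h2 : v ∈ Fu i0 := hvFu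
    rw [ha, Finset.mem_singleton] at h1 h2
    rw [h1, h2]
  have hNv : ∀ x, (T i0).Adj v x → x = u := by
    intro x hx
    obtain ⟨a, ha⟩ := Finset.card_eq_one.mp (honeV i0)
    have h1 : x ∈ Fv i0 := (hmemFv i0 x).mpr hx
    have h2 : u ∈ Fv i0 := (hmemFv i0 u).mpr hadj.symm
    rw [ha, Finset.mem_singleton] at h1 h2
    rw [h1, h2]
  -- but then any vertex reachable from u in T i0 is u or v, contradicting w ∈ T i0
  obtain ⟨p⟩ := (hT i0).1.isConnected ⟨u, (hT i0).2 hus⟩ ⟨w, (hT i0).2 hws⟩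
  have := aux_walk_stay hNu hNv p (Or.inl rfl)
  simp only at this
  rcases this with h1 | h1
  · exact hwu h1
  · exact hwv h1

end Aux

/-- if a connected graph `G` has two adjacent vertices both of
minimum degree `d`, then `κ_k(G) ≤ d - 1` for every `3 ≤ k ≤ |V(G)|`. -/
theorem gconn_le_minDegree_sub_one {V : Type*} [Fintype V]
    (G : SimpleGraph V) [DecidableRel G.Adj] (hG : G.Connected)
    (d : ℕ) (hd : ∀ w : V, d ≤ G.degree w)
    (u v : V) (huv : G.Adj u v) (hu : G.degree u = d) (hv : G.degree v = d)
    (k : ℕ) (hk3 : 3 ≤ k) (hk : k ≤ Fintype.card V) :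
    gconn G k ≤ d - 1 := by
  classical
  -- choose a k-set S containing u and v
  have huvne : u ≠ v := huv.ne
  have h2 : ({u, v} : Finset V).card ≤ k := by
    have : ({u, v} : Finset V).card ≤ 2 := by
      apply (Finset.card_insert_le u {v}).trans
      simp
    omega
  obtain ⟨S, hSsub, -, hScard⟩ := Finset.exists_subsuperset_card_eq
    (Finset.subset_univ ({u, v} : Finset V)) h2 (by simpa using hk)
  -- find a third vertex w in S
  have hnot : ¬ (S ⊆ ({u, v} : Finset V)) := by
    intro hsub
    have := Finset.card_le_card hsub
    have h2' : ({u, v} : Finset V).card ≤ 2 := by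
      apply (Finset.card_insert_le u {v}).trans
      simp
    omega
  obtain ⟨w, hwS, hwnot⟩ := Finset.not_subset.mp hnot
  simp only [Finset.mem_insert, Finset.mem_singleton, not_or] at hwnot
  have hus : u ∈ S := hSsub (by simp)
  have hvs : v ∈ S := hSsub (by simp)
  have htc : treeConn G (S : Set V) ≤ d - 1 := by
    apply csSup_le'
    intro r hr
    exact aux_key G huv hu hv (by exact_mod_cast hus) (by exact_mod_cast hvs)
      (by exact_mod_cast hwS) hwnot.1 hwnot.2 hr
  have hg : gconn G k ≤ treeConn G (S : Set V) :=
    Nat.sInf_le ⟨S, hScard, rfl⟩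
  exact hg.trans htc
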